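/- Let 0 < ρ < 1, 1 ≤ s ≤ p, and T_{ρ,s} = {u ∈ ℝ^p : ‖u_S‖₂ ≥ (ρ/√s)‖u_{S^c}‖₁ for some S ⊂ {1,…,p} with #S = s}. Then T_{ρ,s} ∩ B₂^p ⊂ √(1+(1+ρ^{−1})²) · D, where D = conv{x ∈ S^{p−1} : x has at most s nonzero entries}. -/

import Mathlib

open Pointwise

noncomputable section

def l1S {n : ℕ} (v : Fin n → ℝ) (Λ : Finset (Fin n)) : ℝ := ∑ i ∈ Λ, |v i|

def l2 {n : ℕ} (v : Fin n → ℝ) : ℝ := Real.sqrt (∑ i, (v i) ^ 2)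

def l2S {n : ℕ} (v : Fin n → ℝ) (Λ : Finset (Fin n)) : ℝ :=
  Real.sqrt (∑ i ∈ Λ, (v i) ^ 2)

def sparseHull (p s : ℕ) : Set (Fin p → ℝ) :=
  convexHull ℝ {x : Fin p → ℝ |
    l2 x = 1 ∧ (Finset.univ.filter (fun i => x i ≠ 0)).card ≤ s}

section Aux

lemma exists_top_set {p : ℕ} (s : ℕ) (hsp : s ≤ p) (w : Fin p → ℝ) :
    ∃ T : Finset (Fin p), T.card = s ∧
      (∀ S : Finset (Fin p), S.card = s → ∑ i ∈ S, w i ^ 2 ≤ ∑ i ∈ T, w i ^ 2) ∧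
      (∀ j ∉ T, ∀ i ∈ T, w j ^ 2 ≤ w i ^ 2) := by
  have hne : (Finset.univ.powersetCard s : Finset (Finset (Fin p))).Nonempty :=
    Finset.powersetCard_nonempty.2 (by simpa using hsp)
  obtain ⟨T, hTmem, hTmax⟩ :=
    Finset.exists_max_image (Finset.univ.powersetCard s) (fun S => ∑ i ∈ S, w i ^ 2) hne
  have hTcard : T.card = s := (Finset.mem_powersetCard.1 hTmem).2
  refine ⟨T, hTcard, ?_, ?_⟩
  · intro S hS
    exact hTmax S (Finset.mem_powersetCard.2 ⟨Finset.subset_univ _, hS⟩)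
  · intro j hj i hi
    have hcard : (insert j (T.erase i)).card = s := by
      rw [Finset.card_insert_of_notMem (fun h => hj (Finset.erase_subset _ _ h)),
        Finset.card_erase_of_mem hi, hTcard]
      have : 1 ≤ s := hTcard ▸ Finset.card_pos.2 ⟨i, hi⟩
      omega
    have hle : ∑ k ∈ insert j (T.erase i), w k ^ 2 ≤ ∑ k ∈ T, w k ^ 2 :=
      hTmax _ (Finset.mem_powersetCard.2 ⟨Finset.subset_univ _, hcard⟩)
    rw [Finset.sum_insert (fun h => hj (Finset.erase_subset _ _ h))] at hle
    have herase : ∑ k ∈ T.erase i, w k ^ 2 + w i ^ 2 = ∑ k ∈ T, w k ^ 2 :=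
      Finset.sum_erase_add _ _ hi
    linarith

lemma key_ineq {p s : ℕ} (hs : 1 ≤ s) {ρ : ℝ} (hρ0 : 0 < ρ)
    (u w : Fin p → ℝ) (S T : Finset (Fin p)) (hT : T.card = s)
    (hmax : ∀ S' : Finset (Fin p), S'.card = s →
      ∑ i ∈ S', w i ^ 2 ≤ ∑ i ∈ T, w i ^ 2)
    (hpt : ∀ j ∉ T, ∀ i ∈ T, w j ^ 2 ≤ w i ^ 2)
    (hS : S.card = s)
    (hu1 : ρ / Real.sqrt s * l1S u Sᶜ ≤ l2S u S) (hu2 : l2 u ≤ 1) :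
    ∑ i, u i * w i ≤ Real.sqrt (1 + (1 + ρ⁻¹) ^ 2) * Real.sqrt (∑ i ∈ T, w i ^ 2) := by
  set a := l2S u S with ha
  set b := l2S u Sᶜ with hb
  set n := Real.sqrt (∑ i ∈ T, w i ^ 2) with hn
  have ha0 : 0 ≤ a := Real.sqrt_nonneg _
  have hb0 : 0 ≤ b := Real.sqrt_nonneg _
  have hn0 : 0 ≤ n := Real.sqrt_nonneg _
  have hs' : (0:ℝ) < s := by exact_mod_cast hs
  have hsq : (0:ℝ) < Real.sqrt s := Real.sqrt_pos.2 hs'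
  have hnsq : n ^ 2 = ∑ i ∈ T, w i ^ 2 :=
    Real.sq_sqrt (Finset.sum_nonneg fun i _ => sq_nonneg _)
  have hasq : a ^ 2 = ∑ i ∈ S, u i ^ 2 :=
    Real.sq_sqrt (Finset.sum_nonneg fun i _ => sq_nonneg _)
  have hbsq : b ^ 2 = ∑ i ∈ Sᶜ, u i ^ 2 :=
    Real.sq_sqrt (Finset.sum_nonneg fun i _ => sq_nonneg _)
  have hab1 : a ^ 2 + b ^ 2 ≤ 1 := by
    rw [hasq, hbsq, Finset.sum_add_sum_compl]
    have h0 : (0:ℝ) ≤ l2 u := Real.sqrt_nonneg _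
    have h2 : (l2 u) ^ 2 ≤ 1 := by nlinarith [hu2]
    rwa [l2, Real.sq_sqrt (Finset.sum_nonneg fun i _ => sq_nonneg _)] at h2
  -- pointwise bound on w outside T
  have hwout : ∀ j ∉ T, |w j| ≤ n / Real.sqrt s := by
    intro j hj
    have hsw : (s : ℝ) * w j ^ 2 ≤ ∑ i ∈ T, w i ^ 2 := by
      have : ∑ _i ∈ T, w j ^ 2 ≤ ∑ i ∈ T, w i ^ 2 :=
        Finset.sum_le_sum (fun i hi => hpt j hj i hi)
      rwa [Finset.sum_const, hT, nsmul_eq_mul] at this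
    have h1 : w j ^ 2 ≤ (n / Real.sqrt s) ^ 2 := by
      rw [div_pow, Real.sq_sqrt hs'.le, hnsq, le_div_iff₀ hs']
      linarith
    exact abs_le.2 (abs_le_of_sq_le_sq' h1 (by positivity))
  -- l1 bound
  have hl1 : l1S u Sᶜ ≤ Real.sqrt s * a / ρ := by
    have h2 := mul_le_mul_of_nonneg_right hu1 hsq.le
    have hss : ρ / Real.sqrt s * l1S u Sᶜ * Real.sqrt s = ρ * l1S u Sᶜ := by
      field_simp
    rw [hss] at h2
    rw [le_div_iff₀ hρ0]
    linarith
  have hl1nn : 0 ≤ l1S u Sᶜ := Finset.sum_nonneg fun i _ => abs_nonneg _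
  -- split the sum
  have hsplit : ∑ i, u i * w i
      = ∑ i ∈ S, u i * w i + ∑ i ∈ T \ S, u i * w i + ∑ i ∈ (S ∪ T)ᶜ, u i * w i := by
    rw [← Finset.sum_add_sum_compl (S ∪ T) (fun i => u i * w i)]
    congr 1
    rw [← Finset.sum_union Finset.disjoint_sdiff, Finset.union_sdiff_self_eq_union]
  -- bound 1
  have hb1 : ∑ i ∈ S, u i * w i ≤ a * n := by
    calc ∑ i ∈ S, u i * w i
        ≤ Real.sqrt (∑ i ∈ S, u i ^ 2) * Real.sqrt (∑ i ∈ S, w i ^ 2) :=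
          Real.sum_mul_le_sqrt_mul_sqrt _ _ _
      _ ≤ a * n := by
          rw [ha, l2S]
          exact mul_le_mul_of_nonneg_left (Real.sqrt_le_sqrt (hmax S hS))
            (Real.sqrt_nonneg _)
  -- bound 2
  have hb2 : ∑ i ∈ T \ S, u i * w i ≤ b * n := by
    calc ∑ i ∈ T \ S, u i * w i
        ≤ Real.sqrt (∑ i ∈ T \ S, u i ^ 2) * Real.sqrt (∑ i ∈ T \ S, w i ^ 2) :=
          Real.sum_mul_le_sqrt_mul_sqrt _ _ _
      _ ≤ b * n := by
          apply mul_le_mul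
          · apply Real.sqrt_le_sqrt
            apply Finset.sum_le_sum_of_subset_of_nonneg
            · intro i hi
              simp only [Finset.mem_compl]
              exact (Finset.mem_sdiff.1 hi).2
            · intro i _ _; exact sq_nonneg _
          · exact Real.sqrt_le_sqrt (Finset.sum_le_sum_of_subset_of_nonneg
              (Finset.sdiff_subset) (fun i _ _ => sq_nonneg _))
          · exact Real.sqrt_nonneg _
          · exact hb0
  -- bound 3
  have hb3 : ∑ i ∈ (S ∪ T)ᶜ, u i * w i ≤ a / ρ * n := by
    calc ∑ i ∈ (S ∪ T)ᶜ, u i * w i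
        ≤ ∑ i ∈ (S ∪ T)ᶜ, |u i| * (n / Real.sqrt s) := by
          apply Finset.sum_le_sum
          intro i hi
          have hiT : i ∉ T := by
            simp only [Finset.mem_compl, Finset.mem_union, not_or] at hi
            exact hi.2
          calc u i * w i ≤ |u i * w i| := le_abs_self _
            _ = |u i| * |w i| := abs_mul _ _
            _ ≤ |u i| * (n / Real.sqrt s) :=
                mul_le_mul_of_nonneg_left (hwout i hiT) (abs_nonneg _)
      _ = (∑ i ∈ (S ∪ T)ᶜ, |u i|) * (n / Real.sqrt s) := by
          rw [Finset.sum_mul]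
      _ ≤ l1S u Sᶜ * (n / Real.sqrt s) := by
          apply mul_le_mul_of_nonneg_right _ (by positivity)
          apply Finset.sum_le_sum_of_subset_of_nonneg
          · intro i hi
            simp only [Finset.mem_compl, Finset.mem_union, not_or] at hi ⊢
            exact hi.1
          · intro i _ _; exact abs_nonneg _
      _ ≤ (Real.sqrt s * a / ρ) * (n / Real.sqrt s) := by
          apply mul_le_mul_of_nonneg_right hl1 (by positivity)
      _ = a / ρ * n := by
          field_simp
  -- combine
  have hfinal : (1 + ρ⁻¹) * a + b ≤ Real.sqrt (1 + (1 + ρ⁻¹) ^ 2) := by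
    set c1 := 1 + ρ⁻¹ with hc1
    have hc10 : 0 < c1 := by positivity
    have hsq2 : (c1 * a + b) ^ 2 ≤ 1 + c1 ^ 2 := by nlinarith [sq_nonneg (a - c1 * b)]
    calc c1 * a + b ≤ |c1 * a + b| := le_abs_self _
      _ = Real.sqrt ((c1 * a + b) ^ 2) := (Real.sqrt_sq_eq_abs _).symm
      _ ≤ Real.sqrt (1 + c1 ^ 2) := Real.sqrt_le_sqrt hsq2
  calc ∑ i, u i * w i ≤ a * n + b * n + a / ρ * n := by rw [hsplit]; linarith
    _ = ((1 + ρ⁻¹) * a + b) * n := by field_simp; ring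
    _ ≤ Real.sqrt (1 + (1 + ρ⁻¹) ^ 2) * n :=
        mul_le_mul_of_nonneg_right hfinal hn0

lemma isCompact_convexHull_of_isCompact {p : ℕ} {K : Set (Fin p → ℝ)}
    (hK : IsCompact K) (hne : K.Nonempty) : IsCompact (convexHull ℝ K) := by
  obtain ⟨y₀, hy₀⟩ := hne
  set n := p + 1 with hn
  set Φ : (Fin n → ℝ) × (Fin n → (Fin p → ℝ)) → (Fin p → ℝ) :=
    fun q => ∑ i, q.1 i • q.2 i with hΦ
  have hΦc : Continuous Φ := by
    apply continuous_finset_sum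
    intro i _
    exact ((continuous_apply i).comp continuous_fst).smul
      ((continuous_apply i).comp continuous_snd)
  have hdom : IsCompact ((stdSimplex ℝ (Fin n)) ×ˢ (Set.univ.pi fun _ : Fin n => K)) :=
    IsCompact.prod (isCompact_stdSimplex ..) (isCompact_univ_pi fun _ => hK)
  have heq : convexHull ℝ K = Φ '' ((stdSimplex ℝ (Fin n)) ×ˢ (Set.univ.pi fun _ => K)) := by
    apply Set.Subset.antisymm
    · intro x hx
      obtain ⟨ι, hι, z, v, hzK, hai, hvpos, hvsum, hvx⟩ :=
        eq_pos_convex_span_of_mem_convexHull hx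
      have hcard : Fintype.card ι ≤ n := by
        have h1 := hai.card_le_finrank_succ
        have h2 : Module.finrank ℝ (Fin p → ℝ) = p := by simp
        have h3 := Submodule.finrank_le (vectorSpan ℝ (Set.range z))
        omega
      obtain ⟨e⟩ : Nonempty (ι ↪ Fin n) :=
        Function.Embedding.nonempty_iff_card_le.2 (by simpa using hcard)
      classical
      set t : Fin n → ℝ := fun i => if h : ∃ j, e j = i then v h.choose else 0 with ht
      set y : Fin n → (Fin p → ℝ) := fun i => if h : ∃ j, e j = i then z h.choose else y₀
        with hy
      have hte : ∀ j : ι, t (e j) = v j := by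
        intro j
        have h : ∃ j', e j' = e j := ⟨j, rfl⟩
        have := h.choose_spec
        simp only [ht, dif_pos h]
        rw [e.injective this]
      have hye : ∀ j : ι, y (e j) = z j := by
        intro j
        have h : ∃ j', e j' = e j := ⟨j, rfl⟩
        have := h.choose_spec
        simp only [hy, dif_pos h]
        rw [e.injective this]
      have hrange : Finset.univ.map e ⊆ Finset.univ := Finset.subset_univ _
      have htzero : ∀ i ∈ Finset.univ, i ∉ Finset.univ.map e → t i = 0 := by
        intro i _ hi
        simp only [Finset.mem_map, Finset.mem_univ, true_and] at hi
        have hh : ¬ ∃ j, e j = i := by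
          rintro ⟨j, rfl⟩; exact hi ⟨j, rfl⟩
        simp [ht, dif_neg hh]
      have hsum_t : ∑ i, t i = 1 := by
        rw [← Finset.sum_subset hrange htzero, Finset.sum_map]
        rw [← hvsum]
        exact Finset.sum_congr rfl fun j _ => hte j
      have hsum_ty : ∑ i, t i • y i = x := by
        rw [← Finset.sum_subset hrange
          (fun i hi hni => by rw [htzero i hi hni, zero_smul]), Finset.sum_map]
        rw [← hvx]
        exact Finset.sum_congr rfl fun j _ => by rw [hte j, hye j]
      refine ⟨(t, y), ⟨?_, ?_⟩, hsum_ty⟩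
      · refine ⟨fun i => ?_, hsum_t⟩
        by_cases h : ∃ j, e j = i
        · rw [ht]; simp only [dif_pos h]; exact (hvpos _).le
        · rw [ht]; simp only [dif_neg h]; exact le_refl 0
      · intro i _
        by_cases h : ∃ j, e j = i
        · rw [hy]; simp only [dif_pos h]; exact hzK ⟨_, rfl⟩
        · rw [hy]; simp only [dif_neg h]; exact hy₀
    · rintro x ⟨⟨t, y⟩, ⟨⟨ht0, ht1⟩, hyK⟩, rfl⟩
      exact (convex_convexHull ℝ K).sum_mem (fun i _ => ht0 i) ht1
        (fun i _ => subset_convexHull ℝ K (hyK i (Set.mem_univ i)))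
  rw [heq]
  exact hdom.image hΦc

-- the sparse sphere
lemma sparseSet_isCompact {p s : ℕ} (hsp : s ≤ p) :
    IsCompact {x : Fin p → ℝ |
      l2 x = 1 ∧ (Finset.univ.filter (fun i => x i ≠ 0)).card ≤ s} := by
  classical
  set K := {x : Fin p → ℝ |
    l2 x = 1 ∧ (Finset.univ.filter (fun i => x i ≠ 0)).card ≤ s} with hKdef
  have hclosed : IsClosed K := by
    have h1 : IsClosed {x : Fin p → ℝ | l2 x = 1} := by
      have hc : Continuous (fun x : Fin p → ℝ => l2 x) := by
        unfold l2
        exact Real.continuous_sqrt.comp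
          (continuous_finset_sum _ fun i _ => (continuous_apply i).pow 2)
      exact isClosed_eq hc continuous_const
    have h2 : IsClosed {x : Fin p → ℝ |
        (Finset.univ.filter (fun i => x i ≠ 0)).card ≤ s} := by
      have heq : {x : Fin p → ℝ | (Finset.univ.filter (fun i => x i ≠ 0)).card ≤ s}
          = ⋃ T ∈ (Finset.univ.powersetCard s : Finset (Finset (Fin p))),
              {x : Fin p → ℝ | ∀ i ∉ T, x i = 0} := by
        ext x
        simp only [Set.mem_setOf_eq, Set.mem_iUnion]
        constructor
        · intro hx
          obtain ⟨T, hsub1, hsub2, hcardT⟩ := Finset.exists_subsuperset_card_eq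
            (Finset.subset_univ (Finset.univ.filter (fun i => x i ≠ 0))) hx
            (by simpa using hsp)
          refine ⟨T, Finset.mem_powersetCard.2 ⟨Finset.subset_univ _, hcardT⟩, ?_⟩
          intro i hi
          by_contra hxi
          exact hi (hsub1 (Finset.mem_filter.2 ⟨Finset.mem_univ i, hxi⟩))
        · rintro ⟨T, hT, hx⟩
          have hsub : Finset.univ.filter (fun i => x i ≠ 0) ⊆ T := by
            intro i hi
            by_contra hiT
            exact (Finset.mem_filter.1 hi).2 (hx i hiT)
          calc (Finset.univ.filter (fun i => x i ≠ 0)).card ≤ T.card :=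
                Finset.card_le_card hsub
            _ = s := (Finset.mem_powersetCard.1 hT).2
      rw [heq]
      apply Set.Finite.isClosed_biUnion (Finset.finite_toSet _)
      intro T _
      have : {x : Fin p → ℝ | ∀ i ∉ T, x i = 0}
          = ⋂ i, ⋂ (_ : i ∉ T), {x : Fin p → ℝ | x i = 0} := by
        ext x; simp
      rw [this]
      exact isClosed_iInter fun i => isClosed_iInter fun _ =>
        isClosed_eq (continuous_apply i) continuous_const
    exact h1.inter h2
  have hsub : K ⊆ Metric.closedBall 0 1 := by
    intro x hx
    rw [Metric.mem_closedBall, dist_zero_right]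
    rw [pi_norm_le_iff_of_nonneg zero_le_one]
    intro i
    have hsum : ∑ j, x j ^ 2 = 1 := by
      have h := hx.1
      rw [l2] at h
      have hnn : (0:ℝ) ≤ ∑ j, x j ^ 2 := Finset.sum_nonneg fun j _ => sq_nonneg (x j)
      have h2 := Real.sq_sqrt hnn
      rw [h] at h2
      simpa using h2.symm
    have hle : x i ^ 2 ≤ 1 := by
      rw [← hsum]
      exact Finset.single_le_sum (fun j _ => sq_nonneg (x j)) (Finset.mem_univ i)
    simpa [Real.norm_eq_abs] using (sq_le_one_iff_abs_le_one (x i)).1 hle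
  exact (isCompact_closedBall (0 : Fin p → ℝ) 1).of_isClosed_subset hclosed hsub

lemma single_mem_sparseSet {p s : ℕ} (hs : 1 ≤ s) (i0 : Fin p) :
    (Pi.single i0 1 : Fin p → ℝ) ∈ {x : Fin p → ℝ |
      l2 x = 1 ∧ (Finset.univ.filter (fun i => x i ≠ 0)).card ≤ s} := by
  classical
  constructor
  · rw [l2]
    have : ∑ i, ((Pi.single i0 1 : Fin p → ℝ) i) ^ 2 = 1 := by
      rw [Finset.sum_eq_single i0]
      · simp
      · intro j _ hj; simp [Pi.single_apply, hj]
      · simp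
    rw [this, Real.sqrt_one]
  · have hss : Finset.univ.filter (fun i => (Pi.single i0 1 : Fin p → ℝ) i ≠ 0) ⊆ {i0} := by
      intro i hi
      simp only [Finset.mem_filter] at hi
      by_contra h
      simp only [Finset.mem_singleton] at h
      exact hi.2 (by simp [Pi.single_apply, h])
    calc (Finset.univ.filter (fun i => (Pi.single i0 1 : Fin p → ℝ) i ≠ 0)).card
        ≤ ({i0} : Finset (Fin p)).card := Finset.card_le_card hss
      _ = 1 := Finset.card_singleton _
      _ ≤ s := hs

end Aux

theorem T_rho_s_subset_scaled_hull {p s : ℕ} (hs : 1 ≤ s) (hsp : s ≤ p)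
    (ρ : ℝ) (hρ0 : 0 < ρ) (hρ1 : ρ < 1) :
    {u : Fin p → ℝ | ∃ S : Finset (Fin p), S.card = s ∧
        ρ / Real.sqrt s * l1S u Sᶜ ≤ l2S u S} ∩ {u | l2 u ≤ 1} ⊆
      (Real.sqrt (1 + (1 + ρ⁻¹) ^ 2)) • (sparseHull p s : Set (Fin p → ℝ)) := by
  classical
  set K := {x : Fin p → ℝ |
    l2 x = 1 ∧ (Finset.univ.filter (fun i => x i ≠ 0)).card ≤ s} with hKdef
  set c := Real.sqrt (1 + (1 + ρ⁻¹) ^ 2) with hc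
  have hc0 : 0 < c := Real.sqrt_pos.2 (by positivity)
  have hp : 0 < p := lt_of_lt_of_le hs hsp
  set i0 : Fin p := ⟨0, hp⟩ with hi0
  have hKne : K.Nonempty := ⟨(Pi.single i0 1 : Fin p → ℝ), single_mem_sparseSet hs i0⟩
  have hDcompact : IsCompact (sparseHull p s) :=
    isCompact_convexHull_of_isCompact (sparseSet_isCompact hsp) hKne
  have hDclosed : IsClosed ((c • (sparseHull p s) : Set (Fin p → ℝ))) :=
    (hDcompact.smul c).isClosed
  have hDconvex : Convex ℝ ((c • (sparseHull p s) : Set (Fin p → ℝ))) :=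
    (convex_convexHull ℝ _).smul c
  rintro u ⟨⟨S, hS, hu1⟩, hu2⟩
  by_contra hu
  obtain ⟨f, r, hfr, hru⟩ := geometric_hahn_banach_closed_point hDconvex hDclosed hu
  set w : Fin p → ℝ := fun i => f (fun j => if i = j then (1:ℝ) else 0) with hw
  have hfv : ∀ v : Fin p → ℝ, f v = ∑ i, v i * w i := by
    intro v
    have := LinearMap.pi_apply_eq_sum_univ (f : (Fin p → ℝ) →ₗ[ℝ] ℝ) v
    simpa [smul_eq_mul, hw] using this
  obtain ⟨T, hT, hmax, hpt⟩ := exists_top_set s hsp w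
  set n := Real.sqrt (∑ i ∈ T, w i ^ 2) with hn
  have hn0 : 0 ≤ n := Real.sqrt_nonneg _
  have hkey : f u ≤ c * n := by
    rw [hfv]
    exact key_ineq hs hρ0 u w S T hT hmax hpt hS hu1 hu2
  rcases eq_or_lt_of_le hn0 with hn_eq | hn_pos
  · -- n = 0, so w = 0 on T, and hence everywhere
    have hsum0 : ∑ i ∈ T, w i ^ 2 = 0 :=
      le_antisymm (Real.sqrt_eq_zero'.1 hn_eq.symm)
        (Finset.sum_nonneg fun i _ => sq_nonneg _)
    have hwT : ∀ i ∈ T, w i = 0 := by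
      intro i hi
      have := (Finset.sum_eq_zero_iff_of_nonneg (fun j _ => sq_nonneg (w j))).1 hsum0 i hi
      exact (pow_eq_zero_iff (by norm_num : (2:ℕ) ≠ 0)).1 this
    have hTne : T.Nonempty := Finset.card_pos.1 (hT ▸ hs)
    obtain ⟨i₁, hi₁⟩ := hTne
    have hwall : ∀ j, w j = 0 := by
      intro j
      by_cases hj : j ∈ T
      · exact hwT j hj
      · have := hpt j hj i₁ hi₁
        rw [hwT i₁ hi₁] at this
        nlinarith [sq_nonneg (w j)]
    have hfu0 : f u = 0 := by
      rw [hfv]; exact Finset.sum_eq_zero fun i _ => by rw [hwall i, mul_zero]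
    have hx0 : c • (Pi.single i0 1 : Fin p → ℝ) ∈ c • (sparseHull p s) :=
      Set.smul_mem_smul_set (subset_convexHull ℝ _ (single_mem_sparseSet hs i0))
    have := hfr _ hx0
    rw [map_smul, smul_eq_mul, hfv] at this
    have hzero : ∑ i, (Pi.single i0 1 : Fin p → ℝ) i * w i = 0 :=
      Finset.sum_eq_zero fun i _ => by rw [hwall i, mul_zero]
    rw [hzero, mul_zero] at this
    rw [hfu0] at hru
    linarith
  · -- n > 0
    set x : Fin p → ℝ := fun i => if i ∈ T then w i / n else 0 with hx
    have hnsq : n ^ 2 = ∑ i ∈ T, w i ^ 2 :=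
      Real.sq_sqrt (Finset.sum_nonneg fun i _ => sq_nonneg _)
    have hxK : x ∈ K := by
      constructor
      · rw [l2]
        have hite : ∀ i, x i ^ 2 = if i ∈ T then (w i / n) ^ 2 else 0 := by
          intro i
          simp only [hx]
          rw [apply_ite (· ^ 2)]
          norm_num
        have hxsum : ∑ i, x i ^ 2 = 1 := by
          simp_rw [hite]
          rw [Finset.sum_ite_mem, Finset.univ_inter]
          simp_rw [div_pow]
          rw [← Finset.sum_div, ← hnsq]
          exact div_self (pow_ne_zero 2 hn_pos.ne')
        rw [hxsum, Real.sqrt_one]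
      · have hss : Finset.univ.filter (fun i => x i ≠ 0) ⊆ T := by
          intro i hi
          simp only [Finset.mem_filter] at hi
          by_contra h
          exact hi.2 (by rw [hx]; simp [h])
        calc (Finset.univ.filter (fun i => x i ≠ 0)).card ≤ T.card :=
              Finset.card_le_card hss
          _ = s := hT
          _ ≤ s := le_refl s
    have hfx : f x = n := by
      rw [hfv]
      have hite2 : ∀ i, x i * w i = if i ∈ T then w i ^ 2 / n else 0 := by
        intro i
        simp only [hx]
        split_ifs with h
        · ring
        · ring
      simp_rw [hite2]
      rw [Finset.sum_ite_mem, Finset.univ_inter, ← Finset.sum_div, ← hnsq]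
      rw [sq, mul_div_assoc, div_self hn_pos.ne', mul_one]
    have hcx : c • x ∈ c • (sparseHull p s) :=
      Set.smul_mem_smul_set (subset_convexHull ℝ _ hxK)
    have := hfr _ hcx
    rw [map_smul, smul_eq_mul, hfx] at this
    linarith
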